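/- arXiv:2406.01583 — 3 statements merged into one kernel-verified Lean document; each statement's English description precedes it below -/
import Mathlib

section
/- Let f : E → F be a linear map between real inner product spaces with E nontrivial, such that for all u, v ∈ E, ‖u‖ ≤ ‖v‖ implies ‖f u‖ ≤ ‖f v‖. Then there exists a constant k ≥ 0 such that ⟪f u, f v⟫ = k ⟪u, v⟫ for all u, v ∈ E. -/
open RealInnerProductSpace

theorem stmt_5 {E F : Type*} [NormedAddCommGroup E] [InnerProductSpace ℝ E]
    [Nontrivial E] [NormedAddCommGroup F] [InnerProductSpace ℝ F]
    (f : E →ₗ[ℝ] F)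
    (hf : ∀ u v : E, ‖u‖ ≤ ‖v‖ → ‖f u‖ ≤ ‖f v‖) :
    ∃ k : ℝ, 0 ≤ k ∧ ∀ u v : E, ⟪f u, f v⟫ = k * ⟪u, v⟫ := by
  obtain ⟨x, hx⟩ := exists_ne (0 : E)
  set e : E := ‖x‖⁻¹ • x with he
  have hxn : ‖x‖ ≠ 0 := norm_ne_zero_iff.mpr hx
  have hen : ‖e‖ = 1 := by
    rw [he, norm_smul, norm_inv, norm_norm, inv_mul_cancel₀ hxn]
  have key : ∀ u : E, ‖f u‖ = ‖f e‖ * ‖u‖ := by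
    intro u
    have h1 : ‖u‖ = ‖‖u‖ • e‖ := by
      rw [norm_smul, norm_norm, hen, mul_one]
    have h2 : ‖f u‖ = ‖f (‖u‖ • e)‖ :=
      le_antisymm (hf _ _ h1.le) (hf _ _ h1.ge)
    rw [h2, map_smul, norm_smul, norm_norm, mul_comm]
  refine ⟨‖f e‖ ^ 2, sq_nonneg _, fun u v => ?_⟩
  have hp : ∀ (x y : F), ⟪x, y⟫ = (‖x + y‖ * ‖x + y‖ - ‖x‖ * ‖x‖ - ‖y‖ * ‖y‖) / 2 :=
    fun x y => real_inner_eq_norm_add_mul_self_sub_norm_mul_self_sub_norm_mul_self_div_two x y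
  rw [hp, real_inner_eq_norm_add_mul_self_sub_norm_mul_self_sub_norm_mul_self_div_two u v, ← map_add, key (u + v), key u, key v]
  ring
end

section
/- Let f₁, ..., f_N : E → F be linear maps between real inner product spaces such that (i) each fᵢ satisfies: ‖u‖ ≤ ‖v‖ implies ‖fᵢ u‖ ≤ ‖fᵢ v‖, and (ii) for all i, j and all u, v: ‖u‖ ≤ ‖v‖ implies ‖fᵢ u‖ ≤ ‖f_j v‖. Then there exists a single constant c ≥ 0 such that ‖fᵢ u‖ = c · ‖u‖ for all i and all u ∈ E. -/
theorem stmt_6 {E F : Type*} [NormedAddCommGroup E] [InnerProductSpace ℝ E]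
    [Nontrivial E] [NormedAddCommGroup F] [InnerProductSpace ℝ F]
    (N : ℕ) (f : Fin N → (E →ₗ[ℝ] F))
    (hintra : ∀ i, ∀ u v : E, ‖u‖ ≤ ‖v‖ → ‖f i u‖ ≤ ‖f i v‖)
    (hinter : ∀ i j, ∀ u v : E, ‖u‖ ≤ ‖v‖ → ‖f i u‖ ≤ ‖f j v‖) :
    ∃ c : ℝ, 0 ≤ c ∧ ∀ i, ∀ u : E, ‖f i u‖ = c * ‖u‖ := by
  obtain ⟨x, hx⟩ := exists_ne (0 : E)
  have hnx : ‖x‖ ≠ 0 := norm_ne_zero_iff.mpr hx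
  set e := ‖x‖⁻¹ • x with he_def
  have he : ‖e‖ = 1 := by
    rw [he_def, norm_smul, Real.norm_eq_abs, abs_of_nonneg (inv_nonneg.mpr (norm_nonneg x)),
      inv_mul_cancel₀ hnx]
  rcases Nat.eq_zero_or_pos N with h0 | hN
  · subst h0; exact ⟨0, le_rfl, fun i => i.elim0⟩
  · set i₀ : Fin N := ⟨0, hN⟩
    refine ⟨‖f i₀ e‖, norm_nonneg _, fun i u => ?_⟩
    have key : ‖f i u‖ = ‖f i₀ u‖ :=
      le_antisymm (hinter i i₀ u u le_rfl) (hinter i₀ i u u le_rfl)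
    rw [key]
    by_cases hu : u = 0
    · simp [hu]
    · have hnu : ‖u‖ ≠ 0 := norm_ne_zero_iff.mpr hu
      have h1 : ‖(‖u‖⁻¹ • u)‖ = 1 := by
        rw [norm_smul, Real.norm_eq_abs, abs_of_nonneg (inv_nonneg.mpr (norm_nonneg u)),
          inv_mul_cancel₀ hnu]
      have heq : ‖f i₀ (‖u‖⁻¹ • u)‖ = ‖f i₀ e‖ :=
        le_antisymm (hintra i₀ _ _ (by rw [h1, he])) (hintra i₀ _ _ (by rw [h1, he]))
      have hrw : f i₀ u = ‖u‖ • f i₀ (‖u‖⁻¹ • u) := by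
        rw [map_smul, smul_smul, mul_inv_cancel₀ hnu, one_smul]
      rw [hrw, norm_smul, heq, Real.norm_eq_abs, abs_of_nonneg (norm_nonneg u), mul_comm]
end

section
/- Let f : E → F be a nonzero linear map between real inner product spaces such that ‖u‖ ≤ ‖v‖ implies ‖f u‖ ≤ ‖f v‖. Then f is injective. -/
theorem stmt_15 {E F : Type*} [NormedAddCommGroup E] [InnerProductSpace ℝ E]
    [NormedAddCommGroup F] [InnerProductSpace ℝ F]
    (f : E →ₗ[ℝ] F) (hf0 : f ≠ 0)
    (hf : ∀ u v : E, ‖u‖ ≤ ‖v‖ → ‖f u‖ ≤ ‖f v‖) :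
    Function.Injective f := by
  rw [← LinearMap.ker_eq_bot]
  rw [LinearMap.ker_eq_bot']
  intro x hx
  by_contra hx0
  apply hf0
  ext v
  simp only [LinearMap.zero_apply]
  by_cases hv : v = 0
  · simp [hv]
  · have hvn : ‖v‖ ≠ 0 := norm_ne_zero_iff.mpr hv
    set c : ℝ := ‖x‖ / ‖v‖ with hc
    have hcpos : c ≠ 0 := div_ne_zero (norm_ne_zero_iff.mpr hx0) hvn
    have hw : ‖c • v‖ = ‖x‖ := by
      rw [norm_smul, Real.norm_eq_abs, abs_div, abs_norm, abs_norm,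
        div_mul_cancel₀ _ hvn]
    have h1 : ‖f (c • v)‖ ≤ ‖f x‖ := hf _ _ (le_of_eq hw)
    rw [hx, norm_zero] at h1
    have h2 : f (c • v) = 0 := norm_le_zero_iff.mp h1
    rw [map_smul] at h2
    have := smul_eq_zero.mp h2
    tauto
end
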